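/- arXiv:2007.04647 — 3 statements merged into one kernel-verified Lean document; each statement's English description precedes it below -/
import Mathlib

section
/- Let R be a commutative ring, let X and N be R-modules, and let u, v ∈ R. Suppose u and v both annihilate X, and u, v form a regular sequence on N (u is regular on N, and v is regular on N/uN). Then Ext¹_R(X, N) = 0. -/
open CategoryTheory

/-- Theorem 2.2(2): if `u, v` annihilate `X` and form a regular sequence on `N`,
then `Ext¹_R(X, N) = 0`. -/
theorem ext_one_eq_zero_of_annihilates_of_regular_sequence
    {R : Type u} [CommRing R] (X N : Type u) [AddCommGroup X] [Module R X]
    [AddCommGroup N] [Module R N] (u v : R)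
    (hu : ∀ x : X, u • x = 0) (hv : ∀ x : X, v • x = 0)
    (hreg₁ : Function.Injective fun n : N => u • n)
    (hreg₂ : Function.Injective
      fun y : N ⧸ LinearMap.range (LinearMap.lsmul R N u) => v • y) :
    Subsingleton (((Ext R (ModuleCat R) 1).obj
      (Opposite.op (ModuleCat.of R X))).obj (ModuleCat.of R N)) := by
  classical
  let P : ProjectiveResolution (ModuleCat.of R X) := ProjectiveResolution.of _
  let K := P.complex.linearYonedaObj R (ModuleCat.of R N)
  let L : N →ₗ[R] N := LinearMap.lsmul R N u
  have hL : Function.Injective L := hreg₁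
  -- the null-homotopy of u • 𝟙
  have hcomm : (u • 𝟙 P.complex) ≫ P.π = 0 := by
    have h : (u • 𝟙 P.complex) ≫ P.π = u • P.π := by
      rw [Linear.smul_comp, Category.id_comp]
    rw [h]
    ext x
    show (u • (P.π.f 0)) x = 0
    rw [show ConcreteCategory.hom (u • P.π.f 0) = u • (P.π.f 0).hom from rfl, LinearMap.smul_apply]
    exact hu (P.π.f 0 x)
  let s : Homotopy (u • 𝟙 P.complex) 0 := ProjectiveResolution.liftHomotopyZero _ hcomm
  have hexact : K.ExactAt 1 := by
    rw [HomologicalComplex.exactAt_iff' K 0 1 2 (by simp) (by simp),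
      ShortComplex.moduleCat_exact_iff]
    intro f₀ hf
    let f : P.complex.X 1 ⟶ ModuleCat.of R N := f₀
    have hf' : P.complex.d 2 1 ≫ f = 0 := by
      simp only [K, HomologicalComplex.sc', ChainComplex.linearYonedaObj_d] at hf
      convert hf using 1
      all_goals rfl
    set g : P.complex.X 0 ⟶ ModuleCat.of R N := s.hom 0 1 ≫ f with hg
    -- homotopy identity at degree 1
    have hs : u • f = P.complex.d 1 0 ≫ g := by
      have h1 := s.comm 1
      rw [dNext_eq s.hom (show (ComplexShape.down ℕ).Rel 1 0 by simp),
        prevD_eq s.hom (show (ComplexShape.down ℕ).Rel 2 1 by simp)] at h1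
      simp only [HomologicalComplex.zero_f_apply, add_zero] at h1
      have h2 : (u • 𝟙 P.complex).f 1 ≫ f
          = (P.complex.d 1 0 ≫ s.hom 0 1 + s.hom 1 2 ≫ P.complex.d 2 1) ≫ f := by rw [← h1]
      simp only [Preadditive.add_comp, Category.assoc, hf', Limits.comp_zero, add_zero] at h2
      rw [← hg] at h2
      rw [← h2]
      show u • _ = (u • 𝟙 (P.complex.X 1)) ≫ _
      rw [Linear.smul_comp, Category.id_comp]
    -- each g p lies in u • N
    have hmem : ∀ p : P.complex.X 0, g p ∈ LinearMap.range L := by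
      intro p
      have hεv : P.π.f 0 (v • p) = 0 := by
        rw [map_smul]
        exact hv _
      obtain ⟨q, hq⟩ := (ShortComplex.moduleCat_exact_iff _).mp P.exact₀ (v • p) hεv
      have h3 : g (v • p) = u • (f q) := by
        have h4 := ConcreteCategory.congr_hom hs q
        rw [show ConcreteCategory.hom (u • f) = u • f.hom from rfl, LinearMap.smul_apply] at h4
        rw [show (v • p) = P.complex.d 1 0 q from hq.symm, h4]
        exact (CategoryTheory.comp_apply _ _ _).symm
      let π := Submodule.mkQ (LinearMap.range L)
      have h5 : v • (π (g p)) = 0 := by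
        have hgs : g (v • p) = v • g p := map_smul g.hom v p
        rw [← map_smul π, ← hgs, h3, Submodule.mkQ_apply, Submodule.Quotient.mk_eq_zero]
        exact ⟨f q, rfl⟩
      have h6 : π (g p) = 0 := by
        have := hreg₂ (a₁ := π (g p)) (a₂ := 0) (by simpa using h5)
        exact this
      rwa [Submodule.mkQ_apply, Submodule.Quotient.mk_eq_zero] at h6
    -- descend g through multiplication by u
    let e : (P.complex.X 0 : Type u) →ₗ[R] N :=
      (LinearEquiv.ofInjective L hL).symm.toLinearMap.comp
        (LinearMap.codRestrict (LinearMap.range L) g.hom hmem)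
    have he : ∀ p, u • e p = g p := by
      intro p
      show L (e p) = g p
      have h9 : L ((LinearEquiv.ofInjective L hL).symm (⟨g p, hmem p⟩ : LinearMap.range L)) = g p :=
        LinearEquiv.ofInjective_symm_apply (f := L) (h := hL) ⟨g p, hmem p⟩
      exact h9
    let e' : P.complex.X 0 ⟶ ModuleCat.of R N := ModuleCat.ofHom e
    have hde : P.complex.d 1 0 ≫ e' = f := by
      apply ModuleCat.hom_ext
      apply LinearMap.ext
      intro q
      apply hreg₁
      show u • (P.complex.d 1 0 ≫ e') q = u • f q
      have h7 : (P.complex.d 1 0 ≫ e') q = e' (P.complex.d 1 0 q) :=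
        CategoryTheory.comp_apply _ _ _
      rw [h7]
      have h8 : u • e' (P.complex.d 1 0 q) = g (P.complex.d 1 0 q) := he _
      rw [h8]
      have h9 := ConcreteCategory.congr_hom hs q
      rw [show ConcreteCategory.hom (u • f) = u • f.hom from rfl, LinearMap.smul_apply] at h9
      rw [h9]
      exact (CategoryTheory.comp_apply _ _ _).symm
    refine ⟨e', ?_⟩
    show (K.d 0 1) e' = f₀
    simp only [K, ChainComplex.linearYonedaObj_d]
    convert hde using 1
    exact Iff.rfl
  have hzero : Limits.IsZero (((Ext R (ModuleCat R) 1).obj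
      (Opposite.op (ModuleCat.of R X))).obj (ModuleCat.of R N)) := by
    refine Limits.IsZero.of_iso ?_ (P.isoExt 1 (ModuleCat.of R N))
    rw [← HomologicalComplex.exactAt_iff_isZero_homology]
    exact hexact
  constructor
  intro a b
  have h1 : (𝟙 (((Ext R (ModuleCat R) 1).obj
      (Opposite.op (ModuleCat.of R X))).obj (ModuleCat.of R N)) : _ ⟶ _) = 0 :=
    hzero.eq_of_src _ _
  have h2 := ConcreteCategory.congr_hom h1 a
  have h3 := ConcreteCategory.congr_hom h1 b
  rw [ModuleCat.id_apply] at h2 h3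
  rw [h2, h3]
  rfl
end

section
/- Let R be a commutative ring, let M and N be R-modules, let M₀ ⊆ M be a submodule, and let u, v ∈ R. Suppose u and v both annihilate the quotient M/M₀, and u, v form a regular sequence on N. Then the restriction map Hom_R(M, N) → Hom_R(M₀, N), sending f to its restriction to M₀, is an isomorphism. -/
/-- Theorem 2.2(3): if `u, v` annihilate `M/M₀` and form a regular sequence on `N`,
then the restriction map `Hom_R(M, N) → Hom_R(M₀, N)` is an isomorphism. -/
theorem restriction_bijective_of_annihilates_of_regular_sequence
    {R M N : Type*} [CommRing R] [AddCommGroup M] [Module R M]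
    [AddCommGroup N] [Module R N] (M₀ : Submodule R M) (u v : R)
    (hu : ∀ x : M ⧸ M₀, u • x = 0) (hv : ∀ x : M ⧸ M₀, v • x = 0)
    (hreg₁ : Function.Injective fun n : N => u • n)
    (hreg₂ : Function.Injective
      fun y : N ⧸ LinearMap.range (LinearMap.lsmul R N u) => v • y) :
    Function.Bijective fun f : M →ₗ[R] N => f.domRestrict M₀ := by
  have hmemu : ∀ x : M, u • x ∈ M₀ := fun x => by
    have h := hu (Submodule.Quotient.mk x)
    rwa [← Submodule.Quotient.mk_smul, Submodule.Quotient.mk_eq_zero] at h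
  have hmemv : ∀ x : M, v • x ∈ M₀ := fun x => by
    have h := hv (Submodule.Quotient.mk x)
    rwa [← Submodule.Quotient.mk_smul, Submodule.Quotient.mk_eq_zero] at h
  constructor
  · intro f f' hff'
    ext x
    apply hreg₁
    show u • f x = u • f' x
    rw [← map_smul, ← map_smul]
    have := congrArg (fun h => h ⟨u • x, hmemu x⟩) hff'
    simpa using this
  · intro g
    have key : ∀ x : M, ∃ n : N, u • n = g ⟨u • x, hmemu x⟩ := by
      intro x
      have h1 : v • (Submodule.Quotient.mk (g ⟨u • x, hmemu x⟩) :
          N ⧸ LinearMap.range (LinearMap.lsmul R N u)) = 0 := by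
        rw [← Submodule.Quotient.mk_smul, Submodule.Quotient.mk_eq_zero]
        have heq : v • g ⟨u • x, hmemu x⟩ = u • g ⟨v • x, hmemv x⟩ := by
          rw [← map_smul, ← map_smul]
          congr 1
          ext
          simp [smul_smul, mul_comm]
        rw [heq]
        exact ⟨g ⟨v • x, hmemv x⟩, rfl⟩
      have h2 := hreg₂ (a₁ := Submodule.Quotient.mk (g ⟨u • x, hmemu x⟩)) (a₂ := 0)
        (by simpa using h1)
      rw [Submodule.Quotient.mk_eq_zero] at h2
      obtain ⟨n, hn⟩ := h2
      exact ⟨n, hn⟩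
    choose f0 hf0 using key
    have hadd : ∀ x y : M, f0 (x + y) = f0 x + f0 y := by
      intro x y
      apply hreg₁
      show u • f0 (x + y) = u • (f0 x + f0 y)
      rw [smul_add, hf0, hf0, hf0, ← map_add]
      congr 1
      ext
      simp [smul_add]
    have hsmul : ∀ (c : R) (x : M), f0 (c • x) = c • f0 x := by
      intro c x
      apply hreg₁
      show u • f0 (c • x) = u • c • f0 x
      rw [hf0, smul_comm u c (f0 x), hf0, ← map_smul]
      congr 1
      ext
      simp [smul_smul, mul_comm]
    refine ⟨⟨⟨f0, hadd⟩, hsmul⟩, ?_⟩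
    ext ⟨x, hx⟩
    show f0 x = g ⟨x, hx⟩
    apply hreg₁
    show u • f0 x = u • g ⟨x, hx⟩
    rw [hf0, ← map_smul]
    rfl
end

section
/- Let p be a prime, k a field of characteristic p, and G a cyclic group of order p with generator g. Consider the complex of kG-modules 0 → k → kG → kG → k → 0, where the first map sends 1 ∈ k to the norm element ∑_{i=0}^{p−1} g^i, the middle map is multiplication by (g − 1), and the last map is the augmentation sending every group element to 1. Then this complex is exact but not contractible. -/
/-- The periodicity complex `0 → k → kG → kG → k → 0` for a cyclic group `G` of order
`p` with generator `g` (first map `1 ↦ ∑ gⁱ`, middle map multiplication by `g - 1`, last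
map the augmentation) is exact but not contractible.

Exactness is spelled out degree by degree, and contractibility is spelled out as the
existence of a `kG`-linear contracting homotopy (`kG`-linearity of a `k`-linear map is
expressed as equivariance for left multiplication by group elements, the action on the
trivial module `k` being trivial). -/
theorem periodicity_complex_exact_not_contractible
    {p : ℕ} [Fact p.Prime] (k : Type*) [Field k] [CharP k p]
    (G : Type*) [Group G] [Fintype G] (g : G)
    (hcard : Fintype.card G = p) (hgen : ∀ x : G, x ∈ Subgroup.zpowers g) :
    -- the complex is exact:
    (Function.Injective fun c : k =>
      c • ∑ i ∈ Finset.range p, MonoidAlgebra.of k G (g ^ i)) ∧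
    (∀ x : MonoidAlgebra k G, (MonoidAlgebra.of k G g - 1) * x = 0 ↔
      ∃ c : k, x = c • ∑ i ∈ Finset.range p, MonoidAlgebra.of k G (g ^ i)) ∧
    (∀ x : MonoidAlgebra k G, MonoidAlgebra.lift k k G 1 x = 0 ↔
      ∃ y : MonoidAlgebra k G, x = (MonoidAlgebra.of k G g - 1) * y) ∧
    Function.Surjective ⇑(MonoidAlgebra.lift k k G 1) ∧
    -- but it is not contractible:
    ¬ ∃ (s₁ : MonoidAlgebra k G →ₗ[k] k)
        (s₂ : MonoidAlgebra k G →ₗ[k] MonoidAlgebra k G)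
        (s₃ : k →ₗ[k] MonoidAlgebra k G),
      (∀ (h : G) (x : MonoidAlgebra k G),
        s₁ (MonoidAlgebra.of k G h * x) = s₁ x) ∧
      (∀ (h : G) (x : MonoidAlgebra k G),
        s₂ (MonoidAlgebra.of k G h * x) = MonoidAlgebra.of k G h * s₂ x) ∧
      (∀ (h : G) (c : k), MonoidAlgebra.of k G h * s₃ c = s₃ c) ∧
      (∀ c : k,
        s₁ (c • ∑ i ∈ Finset.range p, MonoidAlgebra.of k G (g ^ i)) = c) ∧
      (∀ x : MonoidAlgebra k G,
        s₁ x • (∑ i ∈ Finset.range p, MonoidAlgebra.of k G (g ^ i)) +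
          s₂ ((MonoidAlgebra.of k G g - 1) * x) = x) ∧
      (∀ x : MonoidAlgebra k G,
        (MonoidAlgebra.of k G g - 1) * s₂ x + s₃ (MonoidAlgebra.lift k k G 1 x) = x) ∧
      (∀ c : k, MonoidAlgebra.lift k k G 1 (s₃ c) = c) := by
  classical
  have hp : p.Prime := Fact.out
  have hp0 : 0 < p := hp.pos
  have hop : orderOf g = p := by
    rw [orderOf_eq_card_of_forall_mem_zpowers hgen, Nat.card_eq_fintype_card, hcard]
  set N : MonoidAlgebra k G := ∑ i ∈ Finset.range p, MonoidAlgebra.of k G (g ^ i) with hN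
  have hsurj : ∀ c : G, ∃ m, m < p ∧ g ^ m = c := by
    intro c
    obtain ⟨m, hm⟩ := (mem_powers_iff_mem_zpowers).2 (hgen c)
    exact ⟨m % p, Nat.mod_lt _ hp0, by rw [← hop, pow_mod_orderOf]; exact hm⟩
  -- N evaluates to 1 at every group element
  have hNa : ∀ c : G, N.coeff c = 1 := by
    intro c
    obtain ⟨m, hm, rfl⟩ := hsurj c
    rw [hN, MonoidAlgebra.coeff_sum, Finset.sum_apply']
    rw [Finset.sum_eq_single_of_mem m (Finset.mem_range.2 hm)]
    · simp [MonoidAlgebra.of_apply, MonoidAlgebra.coeff_single, Finsupp.single_apply]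
    · intro j hj hjm
      have : g ^ j ≠ g ^ m := by
        intro h
        exact hjm (pow_injOn_Iio_orderOf
          (by simpa [hop] using Finset.mem_range.1 hj) (by simpa [hop] using hm) h)
      simp [MonoidAlgebra.of_apply, MonoidAlgebra.coeff_single, Finsupp.single_apply, this]
  have hgN : MonoidAlgebra.of k G g * N = N := by
    ext c
    rw [MonoidAlgebra.of_apply]
    rw [MonoidAlgebra.coeff_single_mul_apply]
    rw [one_mul, hNa, hNa]
  have hgN0 : (MonoidAlgebra.of k G g - 1) * N = 0 := by
    rw [sub_mul, one_mul, hgN, sub_self]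
  -- injectivity of c ↦ c • N
  have inj : Function.Injective fun c : k => c • N := by
    intro a b hab
    have h1 : (a • N).coeff (1 : G) = (b • N).coeff (1 : G) :=
      congrArg (fun z : MonoidAlgebra k G => z.coeff (1 : G)) hab
    rw [MonoidAlgebra.coeff_smul_apply, MonoidAlgebra.coeff_smul_apply, hNa] at h1
    simpa using h1
  refine ⟨inj, ?_, ?_, ?_, ?_⟩
  · -- middle exactness
    intro x
    constructor
    · intro h
      have hx : MonoidAlgebra.of k G g * x = x := by
        have h' : MonoidAlgebra.of k G g * x - 1 * x = 0 := by rw [← sub_mul]; exact h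
        rw [one_mul] at h'
        exact sub_eq_zero.1 h'
      have hshift : ∀ c : G, x.coeff (g⁻¹ * c) = x.coeff c := by
        intro c
        have := congrArg (fun z : MonoidAlgebra k G => z.coeff c) hx
        simpa [MonoidAlgebra.of_apply, MonoidAlgebra.coeff_single_mul_apply] using this
      have hpow : ∀ m : ℕ, x.coeff (g ^ m) = x.coeff 1 := by
        intro m
        induction m with
        | zero => simp
        | succ n ih =>
          have : x.coeff (g⁻¹ * g ^ (n + 1)) = x.coeff (g ^ (n + 1)) := hshift _
          rw [show g⁻¹ * g ^ (n + 1) = g ^ n by group] at this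
          rw [← this, ih]
      refine ⟨x.coeff 1, ?_⟩
      ext c
      obtain ⟨m, _, rfl⟩ := hsurj c
      rw [MonoidAlgebra.coeff_smul_apply, hNa, smul_eq_mul, mul_one, hpow]
    · rintro ⟨c, rfl⟩
      rw [mul_smul_comm, hgN0, smul_zero]
  · -- exactness at the augmentation step
    intro x
    have haug : ∀ y : MonoidAlgebra k G,
        MonoidAlgebra.lift k k G 1 y = ∑ a ∈ y.coeff.support, y.coeff a := by
      intro y
      rw [MonoidAlgebra.lift_apply, Finsupp.sum]
      simp
    constructor
    · intro h
      have hstep : ∀ a : G, ∃ w : MonoidAlgebra k G,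
          MonoidAlgebra.of k G a - 1 = (MonoidAlgebra.of k G g - 1) * w := by
        intro a
        obtain ⟨m, _, rfl⟩ := hsurj a
        refine ⟨∑ j ∈ Finset.range m, (MonoidAlgebra.of k G g) ^ j, ?_⟩
        rw [mul_geom_sum, map_pow]
      choose w hw using hstep
      have hx : (∑ a ∈ x.coeff.support, x.coeff a • MonoidAlgebra.of k G a) = x := by
        conv_rhs => rw [← MonoidAlgebra.sum_coeff_single x]
        rw [Finsupp.sum]
        refine Finset.sum_congr rfl fun a _ => ?_
        rw [MonoidAlgebra.of_apply, MonoidAlgebra.smul_single', mul_one]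
      refine ⟨∑ a ∈ x.coeff.support, x.coeff a • w a, ?_⟩
      rw [Finset.mul_sum]
      calc x = ∑ a ∈ x.coeff.support, x.coeff a • MonoidAlgebra.of k G a := hx.symm
        _ = ∑ a ∈ x.coeff.support, (x.coeff a • (MonoidAlgebra.of k G a - 1) + x.coeff a • (1 : MonoidAlgebra k G)) := by
            refine Finset.sum_congr rfl fun a _ => ?_
            rw [smul_sub, sub_add_cancel]
        _ = (∑ a ∈ x.coeff.support, x.coeff a • (MonoidAlgebra.of k G a - 1)) +
              ∑ a ∈ x.coeff.support, x.coeff a • (1 : MonoidAlgebra k G) := Finset.sum_add_distrib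
        _ = ∑ a ∈ x.coeff.support, x.coeff a • (MonoidAlgebra.of k G a - 1) := by
            rw [← Finset.sum_smul, ← haug, h, zero_smul, add_zero]
        _ = ∑ a ∈ x.coeff.support, (MonoidAlgebra.of k G g - 1) * (x.coeff a • w a) := by
            refine Finset.sum_congr rfl fun a _ => ?_
            rw [hw a, mul_smul_comm]
    · rintro ⟨y, rfl⟩
      rw [map_mul (MonoidAlgebra.lift k k G 1), map_sub (MonoidAlgebra.lift k k G 1),
        map_one (MonoidAlgebra.lift k k G 1), MonoidAlgebra.lift_of]
      simp
  · -- surjectivity of the augmentation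
    intro c
    refine ⟨c • 1, ?_⟩
    rw [map_smul (MonoidAlgebra.lift k k G 1), map_one (MonoidAlgebra.lift k k G 1),
      smul_eq_mul, mul_one]
  · -- non-contractibility
    rintro ⟨s₁, s₂, s₃, h1, -, -, h4, -, -, -⟩
    have e1 : s₁ N = 1 := by simpa using h4 1
    have e2 : s₁ N = 0 := by
      rw [hN, map_sum]
      have hc : ∀ i ∈ Finset.range p, s₁ (MonoidAlgebra.of k G (g ^ i)) = s₁ 1 := by
        intro i _
        simpa using h1 (g ^ i) 1
      rw [Finset.sum_congr rfl hc, Finset.sum_const, Finset.card_range]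
      rw [nsmul_eq_mul, CharP.cast_eq_zero k p, zero_mul]
    exact one_ne_zero (e1.symm.trans e2)
end
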